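/- Let π ∈ C°_n be a cycle-alternating signed permutation of size n whose cycle decomposition consists of a single cycle {O, −O}. Then n is even if and only if O ≠ −O (the cycle consists of two distinct orbits), and n is odd if and only if O = −O (the cycle is a single orbit). -/

import Mathlib

open Polynomial

/-- A signed permutation of size `n`: a permutation `π` of `ℤ` with `π(-i) = -π(i)`
which fixes every integer of absolute value larger than `n` (so it permutes
`{-n,…,-1,1,…,n}`). -/
def IsSignedPerm (n : ℕ) (π : Equiv.Perm ℤ) : Prop :=
  (∀ i : ℤ, π (-i) = -π i) ∧ ∀ i : ℤ, (n : ℤ) < |i| → π i = i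

/-- `π` is cycle-alternating: every `i ∈ {-n,…,-1,1,…,n}` is a cycle peak
(`π⁻¹(i) < i > π(i)`) or a cycle valley (`π⁻¹(i) > i < π(i)`). -/
def IsCycleAlt (n : ℕ) (π : Equiv.Perm ℤ) : Prop :=
  IsSignedPerm n π ∧ ∀ i : ℤ, i ≠ 0 → |i| ≤ (n : ℤ) →
    ((π⁻¹ i < i ∧ π i < i) ∨ (π⁻¹ i > i ∧ π i > i))

/-- `neg(π) = #{1 ≤ i ≤ n : π(i) < 0}`. -/
noncomputable def negStat (n : ℕ) (π : Equiv.Perm ℤ) : ℕ :=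
  ((Finset.Icc (1 : ℤ) (n : ℤ)).filter fun i => π i < 0).card

open scoped Classical in
/-- The number of cycles of a signed permutation of size `n`: a cycle is an unordered
pair `{O, -O}` of orbits; each cycle contains a unique element `i ∈ {1,…,n}` which is
the maximum of `O ∪ (-O)`, and we count those. -/
noncomputable def cyc (n : ℕ) (π : Equiv.Perm ℤ) : ℕ :=
  ((Finset.Icc (1 : ℤ) (n : ℤ)).filter fun i =>
    ∀ j : ℤ, (π.SameCycle i j ∨ π.SameCycle (-i) j) → j ≤ i).card

theorem Equiv.Perm.apply_inv_self (f : Equiv.Perm ℤ) (x : ℤ) : f (f⁻¹ x) = x :=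
  f.apply_symm_apply x

theorem Equiv.Perm.inv_apply_self (f : Equiv.Perm ℤ) (x : ℤ) : f⁻¹ (f x) = x :=
  f.symm_apply_apply x

namespace Aux13

/-- The support set `{-n,…,-1,1,…,n}`. -/
noncomputable def S (n : ℕ) : Finset ℤ := (Finset.Icc (-(n:ℤ)) (n:ℤ)).erase 0

lemma mem_S {n : ℕ} {i : ℤ} : i ∈ S n ↔ i ≠ 0 ∧ |i| ≤ (n:ℤ) := by
  simp [S, Finset.mem_erase, Finset.mem_Icc, abs_le]

lemma neg_mem_S {n : ℕ} {i : ℤ} (h : i ∈ S n) : -i ∈ S n := by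
  rw [mem_S] at h ⊢
  constructor
  · simpa using h.1
  · simpa using h.2

lemma card_S {n : ℕ} (hn : 1 ≤ n) : (S n).card = 2 * n := by
  have h0 : (0:ℤ) ∈ Finset.Icc (-(n:ℤ)) (n:ℤ) := by
    simp only [Finset.mem_Icc]
    constructor <;> omega
  rw [S, Finset.card_erase_of_mem h0, Int.card_Icc]
  omega

section
variable {n : ℕ} {π : Equiv.Perm ℤ}

lemma pi_zero (h : IsCycleAlt n π) : π 0 = 0 := by
  have := h.1.1 0
  simp only [neg_zero] at this
  linarith

lemma pi_ne (h : IsCycleAlt n π) {i : ℤ} (hi : i ∈ S n) : π i ≠ i := by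
  rw [mem_S] at hi
  rcases h.2 i hi.1 hi.2 with ⟨_, h2⟩ | ⟨_, h2⟩ <;> intro he <;> rw [he] at h2 <;> exact lt_irrefl _ h2

lemma pi_mem (h : IsCycleAlt n π) {i : ℤ} (hi : i ∈ S n) : π i ∈ S n := by
  rw [mem_S]
  constructor
  · intro h0
    have : π i = π 0 := by rw [h0, pi_zero h]
    have : i = (0:ℤ) := π.injective this
    rw [mem_S] at hi; exact hi.1 this
  · by_contra hc
    push_neg at hc
    have := h.1.2 (π i) hc
    have : π i = i := π.injective this
    exact pi_ne h hi this

lemma pi_inv_mem (h : IsCycleAlt n π) {i : ℤ} (hi : i ∈ S n) : π⁻¹ i ∈ S n := by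
  rw [mem_S]
  constructor
  · intro h0
    have : i = π 0 := by rw [← h0, Equiv.Perm.apply_inv_self]
    rw [pi_zero h] at this
    rw [mem_S] at hi; exact hi.1 this
  · by_contra hc
    push_neg at hc
    have h2 := h.1.2 (π⁻¹ i) hc
    rw [Equiv.Perm.apply_inv_self] at h2
    have : π i = i := by conv_lhs => rw [h2]; rw [Equiv.Perm.apply_inv_self]
    exact pi_ne h hi this

/-- Type flip under `π`: `π i` is a "valley" iff `i` is not. -/
lemma T_apply (h : IsCycleAlt n π) {i : ℤ} (hi : i ∈ S n) :
    (π i < π (π i) ↔ ¬ (i < π i)) := by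
  have hj := pi_mem h hi
  rw [mem_S] at hj
  have := h.2 (π i) hj.1 hj.2
  rw [Equiv.Perm.inv_apply_self] at this
  rcases this with ⟨h1, h2⟩ | ⟨h1, h2⟩ <;> constructor <;> intro h3 <;> first
    | linarith
    | (exfalso; exact h3 h1)
    | (intro h4; linarith)
  -- fallback handled below if needed

lemma T_neg (h : IsCycleAlt n π) {i : ℤ} (hi : i ∈ S n) :
    (-i < π (-i) ↔ ¬ (i < π i)) := by
  rw [h.1.1 i]
  have hne := pi_ne h hi
  constructor
  · intro h1 h2; linarith
  · intro h1
    rcases lt_or_gt_of_ne hne with h2 | h2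
    · linarith
    · exact absurd h2 h1

lemma pow_neg_comm' (σ : Equiv.Perm ℤ) (hσ : ∀ x : ℤ, σ (-x) = -σ x) (k : ℕ) (x : ℤ) :
    (σ^k) (-x) = -(σ^k) x := by
  induction k with
  | zero => simp
  | succ k ih => rw [pow_succ', Equiv.Perm.mul_apply, Equiv.Perm.mul_apply, ih, hσ]

lemma inv_neg_comm (h : IsCycleAlt n π) (x : ℤ) : π⁻¹ (-x) = -π⁻¹ x := by
  apply π.injective
  rw [Equiv.Perm.apply_inv_self, h.1.1, Equiv.Perm.apply_inv_self]

lemma zpow_neg_comm (h : IsCycleAlt n π) (k : ℤ) (x : ℤ) :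
    (π^k) (-x) = -(π^k) x := by
  cases k with
  | ofNat m =>
    simpa using pow_neg_comm' π h.1.1 m x
  | negSucc m =>
    rw [zpow_negSucc, ← inv_pow]
    exact pow_neg_comm' π⁻¹ (inv_neg_comm h) (m+1) x

lemma pow_mem (h : IsCycleAlt n π) (k : ℕ) {i : ℤ} (hi : i ∈ S n) : (π^k) i ∈ S n := by
  induction k with
  | zero => simpa using hi
  | succ k ih => rw [pow_succ', Equiv.Perm.mul_apply]; exact pi_mem h ih

lemma zpow_mem (h : IsCycleAlt n π) (k : ℤ) {i : ℤ} (hi : i ∈ S n) : (π^k) i ∈ S n := by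
  cases k with
  | ofNat m => simpa using pow_mem h m hi
  | negSucc m =>
    rw [zpow_negSucc, ← inv_pow]
    induction m with
    | zero => simpa using pi_inv_mem h hi
    | succ m ih => rw [pow_succ', Equiv.Perm.mul_apply]; exact pi_inv_mem h ih

lemma sameCycle_neg (h : IsCycleAlt n π) {x y : ℤ} (hxy : π.SameCycle x y) :
    π.SameCycle (-x) (-y) := by
  obtain ⟨k, hk⟩ := hxy
  exact ⟨k, by rw [zpow_neg_comm h k x, hk]⟩

lemma sameCycle_mem (h : IsCycleAlt n π) {x y : ℤ} (hx : x ∈ S n) (hxy : π.SameCycle x y) :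
    y ∈ S n := by
  obtain ⟨k, hk⟩ := hxy
  rw [← hk]; exact zpow_mem h k hx

/-- Parity of "type" along the orbit. -/
lemma T_pow (h : IsCycleAlt n π) (k : ℕ) {i : ℤ} (hi : i ∈ S n) :
    ((π^k) i < π ((π^k) i) ↔ ((i < π i) ↔ Even k)) := by
  induction k with
  | zero => simp
  | succ k ih =>
    have hj := pow_mem h k hi
    rw [pow_succ', Equiv.Perm.mul_apply]
    rw [T_apply h hj, ih, Nat.even_add_one]
    tauto


lemma nat_mem_S (hn : 1 ≤ n) : (n:ℤ) ∈ S n := by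
  rw [mem_S]
  constructor
  · exact_mod_cast Nat.one_le_iff_ne_zero.1 hn
  · rw [abs_of_nonneg (by positivity)]

/-- Everything in `S n` is in the cycle of `±n`. -/
lemma hstar (h : IsCycleAlt n π) (h1 : cyc n π = 1) (hn : 1 ≤ n) :
    ∀ j ∈ S n, π.SameCycle (n:ℤ) j ∨ π.SameCycle (-(n:ℤ)) j := by
  classical
  have hnS : (n:ℤ) ∈ S n := by
    rw [mem_S]
    constructor
    · exact_mod_cast Nat.one_le_iff_ne_zero.1 hn
    · rw [abs_of_nonneg (by positivity)]
  -- n belongs to the cyc filter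
  obtain ⟨a, ha⟩ := Finset.card_eq_one.1 h1
  have hnmem : (n:ℤ) ∈ (Finset.Icc (1 : ℤ) (n : ℤ)).filter fun i =>
      ∀ j : ℤ, (π.SameCycle i j ∨ π.SameCycle (-i) j) → j ≤ i := by
    rw [Finset.mem_filter, Finset.mem_Icc]
    refine ⟨⟨by exact_mod_cast hn, le_refl _⟩, ?_⟩
    intro j hj
    have hjS : j ∈ S n := by
      rcases hj with hj | hj
      · exact sameCycle_mem h hnS hj
      · exact sameCycle_mem h (neg_mem_S hnS) hj
    rw [mem_S] at hjS
    exact le_trans (le_abs_self j) hjS.2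
  have han : a = (n:ℤ) := by
    rw [ha, Finset.mem_singleton] at hnmem; exact hnmem.symm
  subst han
  -- now the main argument
  intro j hjS
  set Cj : Finset ℤ := (S n).filter (fun x => π.SameCycle j x ∨ π.SameCycle (-j) x) with hCj
  have hjC : j ∈ Cj := Finset.mem_filter.2 ⟨hjS, Or.inl (Equiv.Perm.SameCycle.refl π j)⟩
  have hne : Cj.Nonempty := ⟨j, hjC⟩
  set M := Cj.max' hne with hM
  have hMC : M ∈ Cj := Cj.max'_mem hne
  have hMS : M ∈ S n := (Finset.mem_filter.1 hMC).1
  have hMcyc : π.SameCycle j M ∨ π.SameCycle (-j) M := (Finset.mem_filter.1 hMC).2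
  have hjneg : -j ∈ Cj := Finset.mem_filter.2 ⟨neg_mem_S hjS, Or.inr (Equiv.Perm.SameCycle.refl π (-j))⟩
  have hjle : j ≤ M := Cj.le_max' j hjC
  have hjnle : -j ≤ M := Cj.le_max' (-j) hjneg
  have hMpos : 1 ≤ M := by
    rw [mem_S] at hjS
    rcases abs_cases j with ⟨he, _⟩ | ⟨he, _⟩ <;> [skip; skip] <;> omega
  -- claim: membership in cycle of M implies membership in Cj
  have hclosed : ∀ x : ℤ, (π.SameCycle M x ∨ π.SameCycle (-M) x) → x ∈ Cj := by
    intro x hx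
    rcases hMcyc with hjM | hjM
    · rcases hx with hx | hx
      · exact Finset.mem_filter.2 ⟨sameCycle_mem h hMS hx, Or.inl (hjM.trans hx)⟩
      · have : π.SameCycle (-j) (-M) := sameCycle_neg h hjM
        exact Finset.mem_filter.2 ⟨sameCycle_mem h (neg_mem_S hMS) hx, Or.inr (this.trans hx)⟩
    · rcases hx with hx | hx
      · exact Finset.mem_filter.2 ⟨sameCycle_mem h hMS hx, Or.inr (hjM.trans hx)⟩
      · have : π.SameCycle j (-M) := by
          have := sameCycle_neg h hjM
          rwa [neg_neg] at this
        exact Finset.mem_filter.2 ⟨sameCycle_mem h (neg_mem_S hMS) hx, Or.inl (this.trans hx)⟩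
  have hMmem : M ∈ (Finset.Icc (1 : ℤ) (n : ℤ)).filter fun i =>
      ∀ j : ℤ, (π.SameCycle i j ∨ π.SameCycle (-i) j) → j ≤ i := by
    rw [Finset.mem_filter, Finset.mem_Icc]
    refine ⟨⟨hMpos, ?_⟩, ?_⟩
    · rw [mem_S] at hMS
      exact le_trans (le_abs_self M) hMS.2
    · intro x hx
      exact Cj.le_max' x (hclosed x hx)
  rw [ha, Finset.mem_singleton] at hMmem
  rw [hMmem] at hMcyc
  rcases hMcyc with hjM | hjM
  · exact Or.inl hjM.symm
  · refine Or.inr ?_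
    have := sameCycle_neg h hjM
    rw [neg_neg] at this
    exact this.symm

lemma even_of_not (h : IsCycleAlt n π) (h1 : cyc n π = 1) (hn : 1 ≤ n)
    (hP : ¬ π.SameCycle (n:ℤ) (-(n:ℤ))) : Even n := by
  classical
  set O : Finset ℤ := (S n).filter (π.SameCycle (n:ℤ)) with hO
  set O' : Finset ℤ := (S n).filter (π.SameCycle (-(n:ℤ))) with hO'
  have hdisj : Disjoint O O' := by
    rw [Finset.disjoint_left]
    intro x hx hx'
    have h1x : π.SameCycle (n:ℤ) x := (Finset.mem_filter.1 hx).2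
    have h2x : π.SameCycle (-(n:ℤ)) x := (Finset.mem_filter.1 hx').2
    exact hP (h1x.trans h2x.symm)
  have hunion : O ∪ O' = S n := by
    apply Finset.Subset.antisymm
    · intro x hx
      rcases Finset.mem_union.1 hx with hx | hx
      · exact (Finset.mem_filter.1 hx).1
      · exact (Finset.mem_filter.1 hx).1
    · intro x hx
      rcases hstar h h1 hn x hx with hc | hc
      · exact Finset.mem_union_left _ (Finset.mem_filter.2 ⟨hx, hc⟩)
      · exact Finset.mem_union_right _ (Finset.mem_filter.2 ⟨hx, hc⟩)
  have hcard' : O.card = O'.card := by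
    apply Finset.card_bij' (fun x _ => -x) (fun x _ => -x)
    · intro a _; rw [neg_neg]
    · intro a _; rw [neg_neg]
    · intro a ha
      rw [Finset.mem_filter] at ha ⊢
      exact ⟨neg_mem_S ha.1, sameCycle_neg h ha.2⟩
    · intro a ha
      rw [Finset.mem_filter] at ha ⊢
      refine ⟨neg_mem_S ha.1, ?_⟩
      have := sameCycle_neg h ha.2
      rwa [neg_neg] at this
  have htot : O.card + O'.card = 2 * n := by
    rw [← Finset.card_union_of_disjoint hdisj, hunion, card_S hn]
  set Ov : Finset ℤ := O.filter (fun x => x < π x) with hOv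
  set Op : Finset ℤ := O.filter (fun x => ¬ x < π x) with hOp
  have hsplit : Ov.card + Op.card = O.card :=
    Finset.card_filter_add_card_filter_not _
  have hvp : Ov.card = Op.card := by
    apply Finset.card_bij' (fun x _ => π x) (fun x _ => π⁻¹ x)
    · intro a ha
      rw [Finset.mem_filter] at ha
      obtain ⟨haO, haT⟩ := ha
      rw [Finset.mem_filter] at haO
      obtain ⟨haS, hacyc⟩ := haO
      rw [Finset.mem_filter, Finset.mem_filter]
      refine ⟨⟨pi_mem h haS, ?_⟩, ?_⟩
      · exact (Equiv.Perm.sameCycle_apply_right).2 hacyc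
      · rw [T_apply h haS]; exact fun hc => hc haT
    · intro a ha
      rw [Finset.mem_filter] at ha
      obtain ⟨haO, haT⟩ := ha
      rw [Finset.mem_filter] at haO
      obtain ⟨haS, hacyc⟩ := haO
      rw [Finset.mem_filter, Finset.mem_filter]
      have hbS : π⁻¹ a ∈ S n := pi_inv_mem h haS
      refine ⟨⟨hbS, ?_⟩, ?_⟩
      · have : π.SameCycle (n:ℤ) (π (π⁻¹ a)) ↔ π.SameCycle (n:ℤ) (π⁻¹ a) :=
          Equiv.Perm.sameCycle_apply_right
        rw [Equiv.Perm.apply_inv_self] at this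
        exact this.1 hacyc
      · by_contra hc
        have := (T_apply h hbS).2 hc
        rw [Equiv.Perm.apply_inv_self] at this
        exact haT this
    · intro a _; exact Equiv.Perm.inv_apply_self π a
    · intro a _; exact Equiv.Perm.apply_inv_self π a
  refine ⟨Ov.card, by omega⟩

lemma odd_of (h : IsCycleAlt n π) (h1 : cyc n π = 1) (hn : 1 ≤ n)
    (hP : π.SameCycle (n:ℤ) (-(n:ℤ))) : Odd n := by
  classical
  have hnS : (n:ℤ) ∈ S n := nat_mem_S hn
  -- every element of S is in the orbit of n
  have hall : ∀ x ∈ S n, π.SameCycle (n:ℤ) x := by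
    intro x hx
    rcases hstar h h1 hn x hx with hc | hc
    · exact hc
    · exact hP.trans hc
  -- existence of a positive period
  have hex : ∃ d : ℕ, 0 < d ∧ (π^d) (n:ℤ) = (n:ℤ) := by
    have hmap : ∀ a ∈ Finset.range (2*n+1), (π^a) (n:ℤ) ∈ S n :=
      fun a _ => pow_mem h a hnS
    have hlt : (S n).card < (Finset.range (2*n+1)).card := by
      rw [card_S hn, Finset.card_range]; omega
    obtain ⟨a, _, b, _, hab, heq⟩ :=
      Finset.exists_ne_map_eq_of_card_lt_of_maps_to hlt hmap
    -- wlog a < b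
    rcases Nat.lt_or_ge a b with hlt' | hge
    · refine ⟨b - a, by omega, ?_⟩
      have key : (π^a) ((π^(b-a)) (n:ℤ)) = (π^a) (n:ℤ) := by
        rw [← Equiv.Perm.mul_apply, ← pow_add]
        have : a + (b - a) = b := by omega
        rw [this, heq]
      exact (Equiv.injective _) key
    · have hlt'' : b < a := by omega
      refine ⟨a - b, by omega, ?_⟩
      have key : (π^b) ((π^(a-b)) (n:ℤ)) = (π^b) (n:ℤ) := by
        rw [← Equiv.Perm.mul_apply, ← pow_add]
        have : b + (a - b) = a := by omega
        rw [this, ← heq]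
      exact (Equiv.injective _) key
  set d := Nat.find hex with hd
  obtain ⟨hdpos, hdfix⟩ := Nat.find_spec hex
  have hdmin : ∀ m : ℕ, m < d → ¬ (0 < m ∧ (π^m) (n:ℤ) = (n:ℤ)) :=
    fun m hm => Nat.find_min hex hm
  -- reduction of integer exponents
  have hreduce : ∀ k : ℤ, ∃ r : ℕ, r < d ∧ (π^k) (n:ℤ) = (π^r) (n:ℤ) := by
    intro k
    have hd0 : (0:ℤ) < (d:ℤ) := by exact_mod_cast hdpos
    refine ⟨(k % (d:ℤ)).toNat, ?_, ?_⟩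
    · have h1' : k % (d:ℤ) < (d:ℤ) := Int.emod_lt_of_pos k hd0
      have h2' : 0 ≤ k % (d:ℤ) := Int.emod_nonneg k (by omega)
      omega
    · have h2' : 0 ≤ k % (d:ℤ) := Int.emod_nonneg k (by positivity)
      have hksplit : k = k % (d:ℤ) + (d:ℤ) * (k / (d:ℤ)) := (Int.emod_add_mul_ediv k d).symm
      have hfix2 : (π^((d:ℤ) * (k / (d:ℤ)))) (n:ℤ) = (n:ℤ) := by
        rw [zpow_mul]
        have : (π^(d:ℤ)) (n:ℤ) = (n:ℤ) := by
          rw [zpow_natCast]; exact hdfix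
        exact Equiv.Perm.zpow_apply_eq_self_of_apply_eq_self this _
      conv_lhs => rw [hksplit]
      rw [zpow_add, Equiv.Perm.mul_apply, hfix2]
      rw [← zpow_natCast π (k % (d:ℤ)).toNat, Int.toNat_of_nonneg h2']
  -- any natural period is a multiple of d
  have hdvd : ∀ m : ℕ, (π^m) (n:ℤ) = (n:ℤ) → d ∣ m := by
    intro m hm
    have hsplit : m % d + d * (m / d) = m := Nat.mod_add_div m d
    have hfix2 : (π^(d * (m / d))) (n:ℤ) = (n:ℤ) := by
      rw [pow_mul]
      exact Equiv.Perm.pow_apply_eq_self_of_apply_eq_self hdfix _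
    have hmod : (π^(m % d)) (n:ℤ) = (n:ℤ) := by
      have : (π^(m % d)) ((π^(d * (m / d))) (n:ℤ)) = (n:ℤ) := by
        rw [← Equiv.Perm.mul_apply, ← pow_add, hsplit]; exact hm
      rwa [hfix2] at this
    rcases Nat.eq_zero_or_pos (m % d) with h0 | hpos
    · exact Nat.dvd_of_mod_eq_zero h0
    · exact absurd ⟨hpos, hmod⟩ (hdmin _ (Nat.mod_lt m hdpos))
  -- the orbit finset equals S n, hence d = 2n
  have hinj : Set.InjOn (fun j => (π^j) (n:ℤ)) ↑(Finset.range d) := by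
    intro a ha b hb heq
    simp only [Finset.coe_range, Set.mem_Iio] at ha hb
    by_contra hne
    rcases Nat.lt_or_ge a b with hlt' | hge
    · have key : (π^a) ((π^(b-a)) (n:ℤ)) = (π^a) (n:ℤ) := by
        rw [← Equiv.Perm.mul_apply, ← pow_add]
        have : a + (b - a) = b := by omega
        rw [this]; exact heq.symm
      have := (Equiv.injective _) key
      exact hdmin (b-a) (by omega) ⟨by omega, this⟩
    · have hlt'' : b < a := by omega
      have key : (π^b) ((π^(a-b)) (n:ℤ)) = (π^b) (n:ℤ) := by
        rw [← Equiv.Perm.mul_apply, ← pow_add]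
        have : b + (a - b) = a := by omega
        rw [this]; exact heq
      have := (Equiv.injective _) key
      exact hdmin (a-b) (by omega) ⟨by omega, this⟩
  have horb : (Finset.range d).image (fun j => (π^j) (n:ℤ)) = S n := by
    apply Finset.Subset.antisymm
    · intro x hx
      obtain ⟨j, _, hj⟩ := Finset.mem_image.1 hx
      rw [← hj]; exact pow_mem h j hnS
    · intro x hx
      obtain ⟨k, hk⟩ := hall x hx
      obtain ⟨r, hr, hr2⟩ := hreduce k
      rw [hr2] at hk
      exact Finset.mem_image.2 ⟨r, Finset.mem_range.2 hr, hk⟩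
  have hd2n : d = 2 * n := by
    have := Finset.card_image_of_injOn hinj
    rw [horb, card_S hn, Finset.card_range] at this
    omega
  -- from SameCycle n (-n): get r < d with π^r n = -n
  obtain ⟨k, hk⟩ := hP
  obtain ⟨r, hrd, hr2⟩ := hreduce k
  rw [hr2] at hk
  have hrne : r ≠ 0 := by
    intro h0
    rw [h0, pow_zero] at hk
    simp only [Equiv.Perm.coe_one, id_eq] at hk
    omega
  -- π^(2r) n = n, so d = 2n divides 2r, so n ∣ r, so r = n
  have h2r : (π^(r + r)) (n:ℤ) = (n:ℤ) := by
    rw [pow_add, Equiv.Perm.mul_apply, hk, pow_neg_comm' π h.1.1, hk, neg_neg]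
  have hddvd : d ∣ r + r := hdvd _ h2r
  have hrn : r = n := by
    rw [hd2n] at hddvd hrd
    obtain ⟨t, ht⟩ := hddvd
    have ht1 : t = 1 := by
      rcases Nat.lt_or_ge t 2 with h2 | h2
      · interval_cases t
        · omega
        · rfl
      · exfalso
        have : 2 * n * 2 ≤ 2 * n * t := Nat.mul_le_mul_left _ h2
        omega
    rw [ht1, mul_one] at ht
    omega
  -- parity: r is odd
  have hTp := T_pow h r hnS
  rw [hk] at hTp
  have hTn := T_neg h hnS
  have hodd : ¬ Even r := by
    by_cases hT : (n:ℤ) < π (n:ℤ) <;> tauto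
  rw [hrn] at hodd
  exact Nat.not_even_iff_odd.1 hodd

end
end Aux13

theorem stmt13 (n : ℕ) (π : Equiv.Perm ℤ) (hπ : IsCycleAlt n π) (h1 : cyc n π = 1) :
    ∀ i : ℤ, i ≠ 0 → |i| ≤ (n : ℤ) →
      (Even n ↔ ¬ π.SameCycle i (-i)) ∧ (Odd n ↔ π.SameCycle i (-i)) := by
  intro i hi0 hin
  have hn : 1 ≤ n := by
    have h1' : (1:ℤ) ≤ |i| := Int.one_le_abs hi0
    have : (1:ℤ) ≤ (n:ℤ) := le_trans h1' hin
    exact_mod_cast this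
  have hiS : i ∈ Aux13.S n := Aux13.mem_S.2 ⟨hi0, hin⟩
  have hequiv : π.SameCycle i (-i) ↔ π.SameCycle (n:ℤ) (-(n:ℤ)) := by
    rcases Aux13.hstar hπ h1 hn i hiS with hc | hc
    · have hc' : π.SameCycle (-(n:ℤ)) (-i) := Aux13.sameCycle_neg hπ hc
      constructor
      · intro hii; exact (hc.trans hii).trans hc'.symm
      · intro hnn; exact (hc.symm.trans hnn).trans hc'
    · have hc' : π.SameCycle (n:ℤ) (-i) := by
        have := Aux13.sameCycle_neg hπ hc
        rwa [neg_neg] at this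
      constructor
      · intro hii; exact (hc'.trans hii.symm).trans hc.symm
      · intro hnn; exact hc.symm.trans (hnn.symm.trans hc')
  by_cases hP : π.SameCycle (n:ℤ) (-(n:ℤ))
  · have hodd := Aux13.odd_of hπ h1 hn hP
    have heven : ¬ Even n := Nat.not_even_iff_odd.2 hodd
    exact ⟨⟨fun he => absurd he heven, fun hnc => absurd (hequiv.2 hP) hnc⟩,
      ⟨fun _ => hequiv.2 hP, fun _ => hodd⟩⟩
  · have heven := Aux13.even_of_not hπ h1 hn hP
    have hnodd : ¬ Odd n := Nat.not_odd_iff_even.2 heven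
    exact ⟨⟨fun _ hii => hP (hequiv.1 hii), fun _ => heven⟩,
      ⟨fun ho => absurd ho hnodd, fun hii => absurd (hequiv.1 hii) hP⟩⟩
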